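/- Let σ ≥ 1 and 0 ≤ σ₁ < σ/2 < σ₂ ≤ σ be real numbers. Then there exist ε* ∈ (0,1) and constants c, C > 0 such that for all r > 1/ε* and all t ≥ 0: 0 ≤ K̂₁(t,r) ≤ C·r^{−2σ₂}·e^{−c·r^{2(σ−σ₂)}·t}. -/
import Mathlib


/-- The discriminant `D(r) = (r^{2σ₁} + r^{2σ₂})² − 4 r^{2σ}`. -/
noncomputable def Dfun (σ σ₁ σ₂ r : ℝ) : ℝ :=
  (r ^ (2 * σ₁) + r ^ (2 * σ₂)) ^ 2 - 4 * r ^ (2 * σ)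

/-- The characteristic root `λ₁(r) = (−(r^{2σ₁}+r^{2σ₂}) + √D(r))/2`. -/
noncomputable def lam1 (σ σ₁ σ₂ r : ℝ) : ℝ :=
  (-(r ^ (2 * σ₁) + r ^ (2 * σ₂)) + Real.sqrt (Dfun σ σ₁ σ₂ r)) / 2

/-- The characteristic root `λ₂(r) = (−(r^{2σ₁}+r^{2σ₂}) − √D(r))/2`. -/
noncomputable def lam2 (σ σ₁ σ₂ r : ℝ) : ℝ :=
  (-(r ^ (2 * σ₁) + r ^ (2 * σ₂)) - Real.sqrt (Dfun σ σ₁ σ₂ r)) / 2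

/-- The kernel symbol `K̂₁(t,r) = (e^{λ₁(r)t} − e^{λ₂(r)t})/(λ₁(r) − λ₂(r))`. -/
noncomputable def K1hat (σ σ₁ σ₂ r t : ℝ) : ℝ :=
  (Real.exp (lam1 σ σ₁ σ₂ r * t) - Real.exp (lam2 σ σ₁ σ₂ r * t)) /
    (lam1 σ σ₁ σ₂ r - lam2 σ σ₁ σ₂ r)

/-- large-frequency kernel bound
`0 ≤ K̂₁(t,r) ≤ C r^{−2σ₂} e^{−c r^{2(σ−σ₂)} t}` for `r > 1/ε*`, `t ≥ 0`. -/
theorem stmt6 (σ σ₁ σ₂ : ℝ) (hσ : 1 ≤ σ) (h1 : 0 ≤ σ₁) (h2 : σ₁ < σ / 2)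
    (h3 : σ / 2 < σ₂) (h4 : σ₂ ≤ σ) :
    ∃ ε ∈ Set.Ioo (0 : ℝ) 1, ∃ c C : ℝ, 0 < c ∧ 0 < C ∧
      ∀ r : ℝ, 1 / ε < r → ∀ t : ℝ, 0 ≤ t →
        0 ≤ K1hat σ σ₁ σ₂ r t ∧
        K1hat σ σ₁ σ₂ r t ≤
          C * r ^ (-(2 * σ₂)) * Real.exp (-c * r ^ (2 * (σ - σ₂)) * t) := by
  have hβ : 0 < 4 * σ₂ - 2 * σ := by linarith
  set β := 4 * σ₂ - 2 * σ with hβdef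
  clear_value β
  have hx : (0:ℝ) < (8:ℝ) ^ (1/β) := Real.rpow_pos_of_pos (by norm_num) _
  set R : ℝ := 1 + (8:ℝ) ^ (1/β) with hRdef
  clear_value R
  have hR1 : (1:ℝ) < R := by simp [hRdef]; positivity
  refine ⟨R⁻¹, ⟨inv_pos.mpr (by linarith), inv_lt_one_of_one_lt₀ (by linarith)⟩,
    1/2, 2, by norm_num, by norm_num, ?_⟩
  intro r hr t ht
  rw [one_div, inv_inv] at hr
  have hr1 : (1:ℝ) < r := lt_trans hR1 hr
  have hr0 : (0:ℝ) < r := by linarith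
  -- basic power facts
  have hb0 : (0:ℝ) < r ^ (2 * σ₂) := Real.rpow_pos_of_pos hr0 _
  have hb0' : (0:ℝ) < r ^ (2 * σ₁) := Real.rpow_pos_of_pos hr0 _
  have hσ0 : (0:ℝ) < r ^ (2 * σ) := Real.rpow_pos_of_pos hr0 _
  have h12 : r ^ (2 * σ₁) ≤ r ^ (2 * σ₂) :=
    Real.rpow_le_rpow_of_exponent_le hr1.le (by linarith)
  set a := r ^ (2 * σ₁) + r ^ (2 * σ₂) with hadef
  clear_value a
  have ha2 : a ≤ 2 * r ^ (2 * σ₂) := by simp [hadef]; linarith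
  have hage : r ^ (2 * σ₂) ≤ a := by simp [hadef]; linarith
  have ha0 : 0 < a := lt_of_lt_of_le hb0 hage
  -- 8 < r ^ β
  have hxr : (8:ℝ) ^ (1/β) < r := by
    calc (8:ℝ) ^ (1/β) < R := by simp [hRdef]
    _ < r := hr
  have hpow8 : (8:ℝ) < r ^ β := by
    have := Real.rpow_lt_rpow hx.le hxr hβ
    rwa [← Real.rpow_mul (by norm_num : (0:ℝ) ≤ 8), one_div,
      inv_mul_cancel₀ hβ.ne', Real.rpow_one] at this
  -- r^{2σ} * 8 < r^{4σ₂}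
  have hmul : r ^ (2*σ) * r ^ β = r ^ (4*σ₂) := by
    rw [← Real.rpow_add hr0]; congr 1; rw [hβdef]; ring
  have hsum : r ^ (2*σ) * 8 < r ^ (4*σ₂) := by
    rw [← hmul]; exact mul_lt_mul_of_pos_left hpow8 hσ0
  have h4σ : r ^ (2*σ₂) * r ^ (2*σ₂) = r ^ (4*σ₂) := by
    rw [← Real.rpow_add hr0]; congr 1; ring
  -- D bounds
  have hasq : r ^ (4*σ₂) ≤ a ^ 2 := by
    rw [← h4σ]
    have := mul_le_mul hage hage hb0.le ha0.le
    nlinarith [hb0, ha0]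
  have hDdef : Dfun σ σ₁ σ₂ r = a ^ 2 - 4 * r ^ (2*σ) := by simp only [Dfun, hadef]
  have hDge : (1/4) * r ^ (4*σ₂) ≤ Dfun σ σ₁ σ₂ r := by
    rw [hDdef]; linarith [hσ0.le]
  have hDnn : 0 ≤ Dfun σ σ₁ σ₂ r := le_trans (by positivity) hDge
  set s := Real.sqrt (Dfun σ σ₁ σ₂ r) with hsdef
  clear_value s
  have hsnn : 0 ≤ s := hsdef ▸ Real.sqrt_nonneg _
  have hs_ge : (1/2) * r ^ (2*σ₂) ≤ s := by
    rw [hsdef, show (1/2) * r ^ (2*σ₂) = Real.sqrt (((1/2) * r ^ (2*σ₂))^2) from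
      (Real.sqrt_sq (by positivity)).symm]
    apply Real.sqrt_le_sqrt
    nlinarith [hDge, h4σ]
  have hs_pos : 0 < s := lt_of_lt_of_le (by positivity) hs_ge
  have hs_le : s ≤ a := by
    rw [hsdef, show a = Real.sqrt (a^2) from (Real.sqrt_sq ha0.le).symm]
    apply Real.sqrt_le_sqrt
    rw [hDdef]; nlinarith
  have hs_sq : s ^ 2 = Dfun σ σ₁ σ₂ r := by rw [hsdef]; exact Real.sq_sqrt hDnn
  -- lam facts
  have hlamdiff : lam1 σ σ₁ σ₂ r - lam2 σ σ₁ σ₂ r = s := by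
    simp only [lam1, lam2, ← hsdef, ← hadef]; ring
  have hlamle : lam2 σ σ₁ σ₂ r ≤ lam1 σ σ₁ σ₂ r := by
    simp only [lam1, lam2, ← hsdef, ← hadef]; linarith
  -- a - s ≥ r^{2σ-2σ₂}
  have hprod : (a - s) * (a + s) = 4 * r ^ (2*σ) := by
    have : (a - s) * (a + s) = a^2 - s^2 := by ring
    rw [this, hs_sq, hDdef]; ring
  have hexp2 : r ^ (2*σ - 2*σ₂) * r ^ (2*σ₂) = r ^ (2*σ) := by
    rw [← Real.rpow_add hr0]; congr 1; ring
  have hkey : r ^ (2*σ - 2*σ₂) ≤ a - s := by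
    have has : 0 < a + s := by linarith
    have h1' : r ^ (2*σ - 2*σ₂) * (a + s) ≤ (a - s) * (a + s) := by
      rw [hprod]
      calc r ^ (2*σ - 2*σ₂) * (a + s) ≤ r ^ (2*σ - 2*σ₂) * (4 * r ^ (2*σ₂)) := by
            apply mul_le_mul_of_nonneg_left _ (by positivity)
            linarith
        _ = 4 * r ^ (2*σ) := by rw [← hexp2]; ring
    exact le_of_mul_le_mul_right h1' has
  have hlam1 : lam1 σ σ₁ σ₂ r ≤ -(1/2) * r ^ (2*(σ - σ₂)) := by
    have : r ^ (2*(σ - σ₂)) = r ^ (2*σ - 2*σ₂) := by congr 1; ring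
    rw [this]
    simp only [lam1, ← hsdef, ← hadef]
    linarith
  -- finish
  have hEle : Real.exp (lam2 σ σ₁ σ₂ r * t) ≤ Real.exp (lam1 σ σ₁ σ₂ r * t) :=
    Real.exp_le_exp.mpr (mul_le_mul_of_nonneg_right hlamle ht)
  constructor
  · rw [K1hat, hlamdiff]
    exact div_nonneg (by linarith) hsnn
  · rw [K1hat, hlamdiff]
    have hE1 : Real.exp (lam1 σ σ₁ σ₂ r * t) ≤ Real.exp (-(1/2) * r ^ (2*(σ - σ₂)) * t) :=
      Real.exp_le_exp.mpr (mul_le_mul_of_nonneg_right hlam1 ht)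
    have hEpos : 0 < Real.exp (lam2 σ σ₁ σ₂ r * t) := Real.exp_pos _
    calc (Real.exp (lam1 σ σ₁ σ₂ r * t) - Real.exp (lam2 σ σ₁ σ₂ r * t)) / s
        ≤ Real.exp (lam1 σ σ₁ σ₂ r * t) / s := by
          gcongr
          linarith [hEpos.le]
      _ ≤ Real.exp (-(1/2) * r ^ (2*(σ - σ₂)) * t) / ((1/2) * r ^ (2*σ₂)) := by
          apply div_le_div₀ (Real.exp_pos _).le hE1 (by positivity) hs_ge
      _ = 2 * r ^ (-(2 * σ₂)) * Real.exp (-(1/2) * r ^ (2*(σ - σ₂)) * t) := by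
          rw [Real.rpow_neg hr0.le, div_eq_mul_inv, mul_inv]
          ring_nf
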